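/- Let N ≥ 2 and 0 < λ < 1, set α = (N−1)/λ − 1, and define u : EuclideanSpace ℝ (Fin N) → ℝ by u(x) = ‖x‖^(−α). Then for every x ≠ 0, the Pucci maximal operator applied to the Hessian of u vanishes: sSup { Matrix.trace (−(A * D²u(x))) : A a real symmetric N×N matrix with λ‖ξ‖² ≤ ξᵀAξ ≤ ‖ξ‖² for all ξ ∈ ℝᴺ } = 0. In other words, u solves P⁺_{λ,1}(D²u) = 0 in the punctured space ℝᴺ \ {0}. -/

import Mathlib

open MeasureTheory Filter Real Matrix
open scoped RealInnerProductSpace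

/-- The Pucci maximal operator `P⁺_{λ,Λ}(M)`. -/
noncomputable def pucciMax (N : ℕ) (lam Lam : ℝ) (M : Matrix (Fin N) (Fin N) ℝ) : ℝ :=
  sSup {t : ℝ | ∃ A : Matrix (Fin N) (Fin N) ℝ, A.IsSymm ∧
    (∀ ξ : Fin N → ℝ, lam * ∑ i, ξ i ^ 2 ≤ ξ ⬝ᵥ A.mulVec ξ ∧
      ξ ⬝ᵥ A.mulVec ξ ≤ Lam * ∑ i, ξ i ^ 2) ∧
    t = Matrix.trace (-(A * M))}

/-- The Hessian matrix of `u` at `x`, in the standard orthonormal basis. -/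
noncomputable def hessianMatrix (N : ℕ) (u : EuclideanSpace ℝ (Fin N) → ℝ)
    (x : EuclideanSpace ℝ (Fin N)) : Matrix (Fin N) (Fin N) ℝ :=
  Matrix.of fun i j => iteratedFDeriv ℝ 2 u x
    ![EuclideanSpace.basisFun (Fin N) ℝ i, EuclideanSpace.basisFun (Fin N) ℝ j]

section Helpers

variable {N : ℕ}

private lemma trace_mul_vecMulVec' (A : Matrix (Fin N) (Fin N) ℝ) (v : Fin N → ℝ) :
    Matrix.trace (A * Matrix.vecMulVec v v) = v ⬝ᵥ A.mulVec v := by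
  simp only [Matrix.trace, Matrix.diag_apply, Matrix.mul_apply, Matrix.vecMulVec_apply,
    dotProduct, Matrix.mulVec, Finset.mul_sum]
  apply Finset.sum_congr rfl; intro i _
  apply Finset.sum_congr rfl; intro j _
  ring

private lemma diag_conj (B R : Matrix (Fin N) (Fin N) ℝ) (hR : R.IsSymm) (i : Fin N) :
    (R * B * R) i i = (fun j => R i j) ⬝ᵥ B.mulVec (fun j => R i j) := by
  simp only [Matrix.mul_apply, dotProduct, Matrix.mulVec, Finset.sum_mul, Finset.mul_sum]
  rw [Finset.sum_comm]
  apply Finset.sum_congr rfl; intro j _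
  apply Finset.sum_congr rfl; intro k _
  rw [show R k i = R i k from hR.apply i k]
  ring

private lemma trace_conj_nonneg (B R : Matrix (Fin N) (Fin N) ℝ) (hR : R.IsSymm)
    (hB : ∀ v, 0 ≤ v ⬝ᵥ B.mulVec v) : 0 ≤ Matrix.trace (R * B * R) := by
  rw [Matrix.trace]
  apply Finset.sum_nonneg
  intro i _
  rw [Matrix.diag_apply, diag_conj B R hR i]
  exact hB _

private lemma vecMulVec_isSymm (v : Fin N → ℝ) : (Matrix.vecMulVec v v).IsSymm := by
  ext i j
  simp [Matrix.vecMulVec_apply, mul_comm]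

private lemma quad_vecMulVec (v w : Fin N → ℝ) :
    w ⬝ᵥ (Matrix.vecMulVec v v).mulVec w = (v ⬝ᵥ w) ^ 2 := by
  simp only [dotProduct, Matrix.mulVec, Matrix.vecMulVec_apply, Finset.mul_sum]
  rw [sq, Finset.sum_mul]
  apply Finset.sum_congr rfl; intro i _
  rw [Finset.mul_sum]
  apply Finset.sum_congr rfl; intro j _
  ring

private lemma trace_vecMulVec (v : Fin N → ℝ) :
    Matrix.trace (Matrix.vecMulVec v v) = ∑ i, v i ^ 2 := by
  simp [Matrix.trace, Matrix.vecMulVec_apply, sq]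

/-- The Pucci computation for the model matrix `β • x xᵀ + d • 1`. -/
private lemma pucci_zero (lam : ℝ) (hlam0 : 0 < lam) (hlam1 : lam < 1)
    (α : ℝ) (hαpos : 0 < α) (hαl : lam * (α + 1) = (N : ℝ) - 1)
    (x' : Fin N → ℝ) (Q : ℝ) (hQdef : Q = ∑ i, x' i ^ 2) (hQ : 0 < Q)
    (β d : ℝ) (hβ : β = α * (α + 2) * Q ^ (-α/2-2)) (hd : d = -α * Q ^ (-α/2-1)) :
    pucciMax N lam 1 (β • Matrix.vecMulVec x' x' + d • 1) = 0 := by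
  set γ : ℝ := Q ^ (-α/2-2) with hγdef
  have hγ : 0 < γ := Real.rpow_pos_of_pos hQ _
  have hd' : d = -α * (γ * Q) := by
    rw [hd, show (-α/2-1 : ℝ) = (-α/2-2) + 1 from by ring, Real.rpow_add_one hQ.ne']
  set V : Matrix (Fin N) (Fin N) ℝ := Matrix.vecMulVec x' x' with hV
  set M : Matrix (Fin N) (Fin N) ℝ := β • V + d • 1 with hM
  have hxx : x' ⬝ᵥ x' = Q := by
    rw [hQdef, dotProduct]; exact Finset.sum_congr rfl fun i _ => (sq (x' i)).symm ▸ rfl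
  have htr : ∀ A : Matrix (Fin N) (Fin N) ℝ,
      Matrix.trace (-(A * M)) = -(β * (x' ⬝ᵥ A.mulVec x') + d * Matrix.trace A) := by
    intro A
    rw [Matrix.trace_neg, hM, Matrix.mul_add, Matrix.trace_add, Matrix.mul_smul,
      Matrix.trace_smul, Matrix.mul_smul, Matrix.mul_one, Matrix.trace_smul,
      trace_mul_vecMulVec']
    simp
  have hCS : ∀ v : Fin N → ℝ, (x' ⬝ᵥ v) ^ 2 ≤ Q * ∑ i, v i ^ 2 := by
    intro v
    rw [hQdef, dotProduct]
    exact Finset.sum_mul_sq_le_sq_mul_sq _ _ _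
  have hVV : V * V = Q • V := by
    ext i j
    simp only [Matrix.mul_apply, hV, Matrix.vecMulVec_apply, Matrix.smul_apply, smul_eq_mul,
      hQdef, Finset.sum_mul]
    apply Finset.sum_congr rfl; intro k _
    ring
  set c : ℝ := (1 - lam)/Q with hc
  have hc0 : 0 ≤ c := div_nonneg (by linarith) hQ.le
  set A₀ : Matrix (Fin N) (Fin N) ℝ := 1 - c • V with hA0
  have hA0symm : A₀.IsSymm := by
    rw [Matrix.IsSymm, hA0, Matrix.transpose_sub, Matrix.transpose_one, Matrix.transpose_smul,
      vecMulVec_isSymm x']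
  have hA0quad : ∀ v : Fin N → ℝ,
      v ⬝ᵥ A₀.mulVec v = (∑ i, v i ^ 2) - c * (x' ⬝ᵥ v) ^ 2 := by
    intro v
    rw [hA0, Matrix.sub_mulVec, dotProduct_sub, Matrix.one_mulVec,
      Matrix.smul_mulVec, dotProduct_smul, quad_vecMulVec]
    have hvv : v ⬝ᵥ v = ∑ i, v i ^ 2 := by
      simp [dotProduct, sq]
    rw [hvv, smul_eq_mul]
  have hb : ∀ ξ : Fin N → ℝ, lam * ∑ i, ξ i ^ 2 ≤ ξ ⬝ᵥ A₀.mulVec ξ ∧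
      ξ ⬝ᵥ A₀.mulVec ξ ≤ 1 * ∑ i, ξ i ^ 2 := by
    intro ξ
    rw [hA0quad ξ]
    constructor
    · have h := hCS ξ
      have h2 : c * (x' ⬝ᵥ ξ) ^ 2 ≤ c * (Q * ∑ i, ξ i ^ 2) :=
        mul_le_mul_of_nonneg_left h hc0
      have h3 : c * (Q * ∑ i, ξ i ^ 2) = (1 - lam) * ∑ i, ξ i ^ 2 := by
        rw [hc]; field_simp
      linarith
    · have h4 : 0 ≤ c * (x' ⬝ᵥ ξ) ^ 2 := mul_nonneg hc0 (sq_nonneg _)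
      linarith
  have hT0 : Matrix.trace A₀ = (N : ℝ) - (1 - lam) := by
    rw [hA0, Matrix.trace_sub, Matrix.trace_one, Matrix.trace_smul, _root_.trace_vecMulVec,
      ← hQdef, smul_eq_mul, hc]
    field_simp
    rw [Fintype.card_fin]
  have hq0 : x' ⬝ᵥ A₀.mulVec x' = lam * Q := by
    rw [hA0quad x', ← hQdef, hxx, hc]
    field_simp
    ring
  have h0mem : (0 : ℝ) ∈ {t : ℝ | ∃ A : Matrix (Fin N) (Fin N) ℝ, A.IsSymm ∧
      (∀ ξ : Fin N → ℝ, lam * ∑ i, ξ i ^ 2 ≤ ξ ⬝ᵥ A.mulVec ξ ∧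
        ξ ⬝ᵥ A.mulVec ξ ≤ 1 * ∑ i, ξ i ^ 2) ∧
      t = Matrix.trace (-(A * M))} := by
    refine ⟨A₀, hA0symm, hb, ?_⟩
    rw [htr A₀, hq0, hT0, hβ, hd']
    linear_combination (α * γ * Q) * hαl
  have hub : ∀ t ∈ {t : ℝ | ∃ A : Matrix (Fin N) (Fin N) ℝ, A.IsSymm ∧
      (∀ ξ : Fin N → ℝ, lam * ∑ i, ξ i ^ 2 ≤ ξ ⬝ᵥ A.mulVec ξ ∧
        ξ ⬝ᵥ A.mulVec ξ ≤ 1 * ∑ i, ξ i ^ 2) ∧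
      t = Matrix.trace (-(A * M))}, t ≤ 0 := by
    rintro t ⟨A, hAs, hAb, rfl⟩
    rw [htr A]
    set q : ℝ := x' ⬝ᵥ A.mulVec x' with hqdef
    set T : ℝ := Matrix.trace A with hTdef
    have h1 : lam * Q ≤ q := by
      have := (hAb x').1
      rwa [← hQdef] at this
    set B : Matrix (Fin N) (Fin N) ℝ := 1 - A with hB
    have hBq : ∀ v : Fin N → ℝ, 0 ≤ v ⬝ᵥ B.mulVec v := by
      intro v
      have h := (hAb v).2
      rw [one_mul] at h
      rw [hB, Matrix.sub_mulVec, dotProduct_sub, Matrix.one_mulVec]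
      have hvv : v ⬝ᵥ v = ∑ i, v i ^ 2 := by simp [dotProduct, sq]
      rw [hvv]
      linarith
    set R : Matrix (Fin N) (Fin N) ℝ := Q • 1 - V with hR
    have hRsym : R.IsSymm := by
      rw [Matrix.IsSymm, hR, Matrix.transpose_sub, Matrix.transpose_smul,
        Matrix.transpose_one, vecMulVec_isSymm x']
    have hRR : R * R = Q • R := by
      rw [hR, Matrix.sub_mul, Matrix.mul_sub, Matrix.mul_sub, hVV]
      simp only [Matrix.smul_mul, Matrix.mul_smul, Matrix.one_mul, Matrix.mul_one, smul_sub]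
      module
    have hpos : 0 ≤ Matrix.trace (R * B * R) := trace_conj_nonneg B R hRsym hBq
    have hcyc : Matrix.trace (R * B * R) = Q * Matrix.trace (R * B) := by
      rw [Matrix.trace_mul_cycle, hRR, Matrix.smul_mul, Matrix.trace_smul, smul_eq_mul]
    have htrRB : 0 ≤ Matrix.trace (R * B) := by
      rw [hcyc] at hpos
      exact nonneg_of_mul_nonneg_right hpos hQ
    have hexp : Matrix.trace (R * B) = Q * ((N : ℝ) - T) - (Q - q) := by
      rw [hR, Matrix.sub_mul, Matrix.trace_sub, Matrix.smul_mul, Matrix.one_mul,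
        Matrix.trace_smul, Matrix.trace_mul_comm V B, trace_mul_vecMulVec' B x',
        hB, Matrix.trace_sub, Matrix.trace_one, Matrix.sub_mulVec, dotProduct_sub,
        Matrix.one_mulVec, hxx, smul_eq_mul, ← hTdef, ← hqdef, Fintype.card_fin]
    have h2 : Q * T ≤ Q * ((N : ℝ) - 1) + q := by
      rw [hexp] at htrRB
      nlinarith [htrRB]
    have h4 : Q * T ≤ (α + 2) * q := by
      have h5 : Q * ((N : ℝ) - 1) = (Q * lam) * (α + 1) := by
        rw [← hαl]; ring
      have h6 : (Q * lam) * (α + 1) ≤ q * (α + 1) :=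
        mul_le_mul_of_nonneg_right (by linarith) (by linarith)
      nlinarith [h2, h5, h6]
    rw [hβ, hd']
    have h5 : 0 ≤ (α * γ) * ((α + 2) * q - Q * T) :=
      mul_nonneg (mul_nonneg hαpos.le hγ.le) (by linarith)
    nlinarith [h5]
  rw [pucciMax]
  exact le_antisymm (csSup_le ⟨0, h0mem⟩ hub) (le_csSup ⟨0, hub⟩ h0mem)

/-- The second derivative of `u = ‖·‖ ^ (-α)` at a point `x ≠ 0`. -/
private lemma second_deriv_eq (α : ℝ) (hαpos : 0 < α) (u : EuclideanSpace ℝ (Fin N) → ℝ)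
    (hu : ∀ y : EuclideanSpace ℝ (Fin N), u y = ‖y‖ ^ (-α))
    (x : EuclideanSpace ℝ (Fin N)) (hx : x ≠ 0) :
    ∀ v w : EuclideanSpace ℝ (Fin N),
      fderiv ℝ (fderiv ℝ u) x v w
        = (α*(α+2) * (‖x‖^2:ℝ) ^ (-α/2-2)) * ⟪x, v⟫ * ⟪x, w⟫
          + (-α * (‖x‖^2:ℝ) ^ (-α/2-1)) * ⟪v, w⟫ := by
  have hu2 : ∀ y : EuclideanSpace ℝ (Fin N), u y = (‖y‖ ^ 2 : ℝ) ^ (-α/2) := by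
    intro y
    rw [hu y, ← Real.rpow_natCast ‖y‖ 2, ← Real.rpow_mul (norm_nonneg y)]
    norm_num
    congr 1
    ring
  have hd1 : ∀ y : EuclideanSpace ℝ (Fin N), y ≠ 0 →
      HasFDerivAt u ((-α/2 * (‖y‖^2:ℝ) ^ (-α/2-1)) • ((2:ℕ) • (innerSL ℝ y))) y := by
    intro y hy
    have h0 : (‖y‖^2 : ℝ) ≠ 0 := pow_ne_zero _ (norm_ne_zero_iff.2 hy)
    have := (hasStrictFDerivAt_norm_sq y).hasFDerivAt.rpow_const (p := -α/2) (Or.inl h0)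
    exact this.congr_of_eventuallyEq (Filter.Eventually.of_forall fun z => (hu2 z))
  have hfd : ∀ (y : EuclideanSpace ℝ (Fin N)), y ≠ 0 → ∀ w,
      fderiv ℝ u y w = (-α * (‖y‖^2:ℝ) ^ (-α/2-1)) * ⟪y, w⟫ := by
    intro y hy w
    rw [(hd1 y hy).fderiv]
    simp [innerSL_apply_apply]
    ring
  intro v w
  have h0 : (‖x‖^2 : ℝ) ≠ 0 := pow_ne_zero _ (norm_ne_zero_iff.2 hx)
  have hc : HasFDerivAt (fun y : EuclideanSpace ℝ (Fin N) => -α * (‖y‖^2:ℝ) ^ (-α/2-1))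
      ((-α) • (((-α/2-1) * (‖x‖^2:ℝ) ^ (-α/2-2)) • ((2:ℕ) • (innerSL ℝ x)))) x := by
    have := ((hasStrictFDerivAt_norm_sq x).hasFDerivAt.rpow_const
      (p := -α/2-1) (Or.inl h0)).const_mul (-α)
    rw [show (-α/2-1-1 : ℝ) = -α/2-2 from by ring] at this
    exact this
  have hw : HasFDerivAt (fun y : EuclideanSpace ℝ (Fin N) => (⟪y, w⟫ : ℝ))
      (innerSL ℝ w) x := by
    have : (fun y : EuclideanSpace ℝ (Fin N) => (⟪y, w⟫ : ℝ))
        = fun y => innerSL ℝ w y := by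
      funext y; rw [innerSL_apply_apply]; exact real_inner_comm w y
    rw [this]
    exact (innerSL ℝ w).hasFDerivAt
  have hg := hc.mul hw
  have hev : (fun y => fderiv ℝ u y w) =ᶠ[nhds x]
      (fun y : EuclideanSpace ℝ (Fin N) => (-α * (‖y‖^2:ℝ) ^ (-α/2-1)) * ⟪y, w⟫) := by
    filter_upwards [IsOpen.mem_nhds isOpen_ne hx] with y hy
    exact hfd y hy w
  have hgd := hg.congr_of_eventuallyEq hev
  have hfd2 := hgd.fderiv
  have hcd : ContDiffAt ℝ 2 u x := by
    have h1 : ContDiffAt ℝ 2 (fun y : EuclideanSpace ℝ (Fin N) => (‖y‖^2 : ℝ)) x :=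
      (contDiff_norm_sq ℝ).contDiffAt
    have h2 : ContDiffAt ℝ 2 (fun t : ℝ => t ^ (-α/2)) ((‖x‖^2 : ℝ)) :=
      Real.contDiffAt_rpow_const_of_ne h0
    have := h2.comp x h1
    exact this.congr_of_eventuallyEq (Filter.Eventually.of_forall fun z => (hu2 z))
  have hdiff : DifferentiableAt ℝ (fderiv ℝ u) x := by
    have := hcd.fderiv_right (m := 1) (by norm_num)
    exact this.differentiableAt (by norm_num)
  have key : fderiv ℝ (fun y => fderiv ℝ u y w) x = (fderiv ℝ (fderiv ℝ u) x).flip w := by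
    have := fderiv_clm_apply (c := fderiv ℝ u) (u := fun _ => w) hdiff (differentiableAt_const w)
    simpa using this
  have happ : fderiv ℝ (fderiv ℝ u) x v w = fderiv ℝ (fun y => fderiv ℝ u y w) x v := by
    rw [key]; rfl
  rw [happ, hfd2]
  simp only [ContinuousLinearMap.add_apply, ContinuousLinearMap.smul_apply, innerSL_apply_apply,
    smul_eq_mul, nsmul_eq_mul, ContinuousLinearMap.coe_smul', Pi.smul_apply]
  rw [real_inner_comm w v]
  ring

end Helpers

/-- For `N ≥ 2`, `0 < λ < 1` and `α = (N-1)/λ - 1`, the function `u(x) = ‖x‖^(-α)` solves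
`P⁺_{λ,1}(D²u) = 0` in the punctured space `ℝᴺ \ {0}`. -/
theorem pucci_fundamental_solution (N : ℕ) (hN : 2 ≤ N) (lam : ℝ)
    (hlam0 : 0 < lam) (hlam1 : lam < 1) (α : ℝ) (hα : α = ((N : ℝ) - 1) / lam - 1)
    (u : EuclideanSpace ℝ (Fin N) → ℝ)
    (hu : ∀ x : EuclideanSpace ℝ (Fin N), u x = ‖x‖ ^ (-α)) :
    ∀ x : EuclideanSpace ℝ (Fin N), x ≠ 0 →
      pucciMax N lam 1 (hessianMatrix N u x) = 0 := by
  intro x hx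
  have hN1 : (1 : ℝ) ≤ (N : ℝ) - 1 := by
    have : (2 : ℝ) ≤ (N : ℝ) := by exact_mod_cast hN
    linarith
  have hαpos : 0 < α := by
    rw [hα]
    have h1 : 1 < ((N : ℝ) - 1) / lam := (one_lt_div hlam0).mpr (by linarith)
    linarith
  have hαl : lam * (α + 1) = (N : ℝ) - 1 := by
    rw [hα]
    field_simp
    ring
  set x' : Fin N → ℝ := fun i => x i with hx'
  set Q : ℝ := ‖x‖ ^ 2 with hQ
  have hQpos : 0 < Q := by
    rw [hQ]
    exact pow_pos (norm_pos_iff.mpr hx) 2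
  have hQdef : Q = ∑ i, x' i ^ 2 := by
    rw [hQ, EuclideanSpace.norm_eq, Real.sq_sqrt (by positivity)]
    exact Finset.sum_congr rfl fun i _ => by rw [Real.norm_eq_abs, sq_abs]
  set β : ℝ := α * (α + 2) * Q ^ (-α/2-2) with hβ
  set d : ℝ := -α * Q ^ (-α/2-1) with hd
  have hess_eq : hessianMatrix N u x = β • Matrix.vecMulVec x' x' + d • 1 := by
    ext i j
    have h2 := second_deriv_eq α hαpos u hu x hx
      (EuclideanSpace.basisFun (Fin N) ℝ i) (EuclideanSpace.basisFun (Fin N) ℝ j)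
    have hiter : hessianMatrix N u x i j
        = fderiv ℝ (fderiv ℝ u) x (EuclideanSpace.basisFun (Fin N) ℝ i)
            (EuclideanSpace.basisFun (Fin N) ℝ j) := by
      rw [hessianMatrix, Matrix.of_apply, iteratedFDeriv_two_apply]
      simp
    rw [hiter, h2]
    have hxi : ∀ k : Fin N, (⟪x, (EuclideanSpace.basisFun (Fin N) ℝ k : EuclideanSpace ℝ (Fin N))⟫ : ℝ) = x k := by
      intro k
      rw [EuclideanSpace.basisFun_apply, EuclideanSpace.inner_single_right]
      simp
    have hij : (⟪(EuclideanSpace.basisFun (Fin N) ℝ i : EuclideanSpace ℝ (Fin N)),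
        (EuclideanSpace.basisFun (Fin N) ℝ j : EuclideanSpace ℝ (Fin N))⟫ : ℝ)
        = if i = j then 1 else 0 := by
      exact orthonormal_iff_ite.mp (EuclideanSpace.basisFun (Fin N) ℝ).orthonormal i j
    rw [hxi i, hxi j, hij]
    simp only [Matrix.add_apply, Matrix.smul_apply, Matrix.vecMulVec_apply,
      Matrix.one_apply, smul_eq_mul, hβ, hd, hQ, hx']
    by_cases h : i = j
    · subst h
      simp only [if_pos rfl, mul_one]
      ring
    · simp only [if_neg h, mul_zero]
      ring
  rw [hess_eq]
  exact pucci_zero lam hlam0 hlam1 α hαpos hαl x' Q hQdef hQpos β d hβ hd
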